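/- Measure estimate for resonant frequencies: for σ > 1 and e_n satisfying the growing gap condition e_{n+1} - e_n ≥ c·n (c > 0) and the Lipschitz-in-ω bound |||e||| < 1, the set of ω ∈ [ω₋, ω₊] ⊂ (0,∞) for which there exist k, m, n ∈ ℕ with n > m and |ωk + e_m(ω) - e_n(ω)| < γ (k + n - m)^{-σ} has Lebesgue measure at most C·γ/(1 - |||e|||), with C depending only on σ, c, ω₋, ω₊. -/

import Mathlib

open MeasureTheory Real
open scoped ENNReal

private lemma vol_le_of_abs_sub_le {S : Set ℝ} {L : ℝ}
    (h : ∀ x ∈ S, ∀ y ∈ S, |x - y| ≤ L) : volume S ≤ ENNReal.ofReal L := by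
  refine (Real.volume_le_diam S).trans (EMetric.diam_le ?_)
  intro x hx y hy
  rw [edist_dist, Real.dist_eq]
  exact ENNReal.ofReal_le_ofReal (h x hx y hy)

private lemma gap_sum {c : ℝ} {e : ℕ → ℝ → ℝ} {ω : ℝ} (hc : 0 ≤ c)
    (hgap : ∀ n : ℕ, c * n ≤ e (n + 1) ω - e n ω) :
    ∀ m d : ℕ, c * (m * d) ≤ e (m + d) ω - e m ω := by
  intro m d
  induction d with
  | zero => simp
  | succ d ih =>
    have h1 : c * (↑(m + d)) ≤ e (m + (d + 1)) ω - e (m + d) ω := by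
      rw [show m + (d + 1) = (m + d) + 1 from rfl]
      exact hgap (m + d)
    push_cast at h1 ih ⊢
    nlinarith [Nat.cast_nonneg (α := ℝ) d, Nat.cast_nonneg (α := ℝ) m]

private lemma rpow_neg_le_of_le {s a b A : ℝ} (hs : 0 < s) (ha : 0 < a) (hb : 0 < b)
    (hA : 0 < A) (h : a ≤ A * b) : b ^ (-s) ≤ A ^ s * a ^ (-s) := by
  have h1 : a ^ s ≤ (A * b) ^ s := Real.rpow_le_rpow ha.le h hs.le
  rw [Real.mul_rpow hA.le hb.le] at h1
  have hbs : (0:ℝ) < b ^ s := Real.rpow_pos_of_pos hb s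
  have has : (0:ℝ) < a ^ s := Real.rpow_pos_of_pos ha s
  calc b ^ (-s) = 1 / b ^ s := by rw [Real.rpow_neg hb.le, one_div]
    _ ≤ A ^ s / a ^ s := by rw [div_le_div_iff₀ hbs has]; nlinarith
    _ = A ^ s * a ^ (-s) := by rw [Real.rpow_neg ha.le, div_eq_mul_inv]

private noncomputable def tfun (s : ℝ) (j : ℕ) : ℝ := (j : ℝ) ^ (-s)

private lemma tfun_nonneg (s : ℝ) (j : ℕ) : 0 ≤ tfun s j :=
  Real.rpow_nonneg (Nat.cast_nonneg j) _

private lemma tfun_zero {s : ℝ} (hs : 0 < s) : tfun s 0 = 0 := by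
  rw [tfun]
  simp only [Nat.cast_zero]
  exact Real.zero_rpow (by linarith)

private noncomputable def wfun (s : ℝ) (m n : ℕ) : ℝ :=
  if m = 0 then tfun s (max (n - 1) 1) else tfun s m * tfun s (n - m)

private lemma wfun_nonneg (s : ℝ) (m n : ℕ) : 0 ≤ wfun s m n := by
  rw [wfun]
  by_cases hm : m = 0
  · simp only [hm, if_pos]
    exact tfun_nonneg _ _
  · simp only [hm, if_false]
    exact mul_nonneg (tfun_nonneg _ _) (tfun_nonneg _ _)

private noncomputable def resZ (s : ℝ) : ℝ≥0∞ := ∑' j : ℕ, ENNReal.ofReal (tfun s j)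

private lemma resZ_ne_top {s : ℝ} (hs : 1 < s) : resZ s ≠ ⊤ := by
  rw [resZ, ← ENNReal.ofReal_tsum_of_nonneg (tfun_nonneg s)
    (Real.summable_nat_rpow.mpr (by linarith))]
  exact ENNReal.ofReal_ne_top

private lemma tsum_shift {s : ℝ} (hs : 0 < s) (m₀ : ℕ) :
    (∑' n : ℕ, ENNReal.ofReal (tfun s (n - m₀))) = resZ s := by
  rw [resZ]
  have hinj : Function.Injective (fun j : ℕ => j + m₀) := fun a b h => by
    simp only [] at h; omega
  have hsupp : Function.support (fun n : ℕ => ENNReal.ofReal (tfun s (n - m₀)))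
      ⊆ Set.range (fun j : ℕ => j + m₀) := by
    intro x hx
    by_contra hxr
    have hxm : x < m₀ := by
      by_contra hge
      exact hxr ⟨x - m₀, by show x - m₀ + m₀ = x; omega⟩
    have h0 : x - m₀ = 0 := by omega
    apply hx
    show ENNReal.ofReal (tfun s (x - m₀)) = 0
    rw [h0, tfun_zero hs]
    exact ENNReal.ofReal_zero
  have := hinj.tsum_eq hsupp
  rw [← this]
  congr 1
  funext j
  rw [Nat.add_sub_cancel]

private lemma tsum_shift' {s : ℝ} (hs : 0 < s) :
    (∑' n : ℕ, ENNReal.ofReal (tfun s (n + 1))) = resZ s := by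
  have h : resZ s = ENNReal.ofReal (tfun s 0) + ∑' n : ℕ, ENNReal.ofReal (tfun s (n + 1)) := by
    rw [resZ]; exact tsum_eq_zero_add' ENNReal.summable
  rw [h, tfun_zero hs, ENNReal.ofReal_zero, zero_add]

private noncomputable def resW (s : ℝ) : ℝ≥0∞ := ∑' q : ℕ × ℕ, ENNReal.ofReal (wfun s q.1 q.2)

private lemma resW_eq {s : ℝ} (hs : 0 < s) :
    resW s = (1 + (1 + resZ s)) + resZ s * resZ s := by
  have hrow0 : (∑' n : ℕ, ENNReal.ofReal (wfun s 0 n)) = 1 + (1 + resZ s) := by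
    rw [tsum_eq_zero_add' ENNReal.summable, tsum_eq_zero_add' ENNReal.summable]
    have h0 : wfun s 0 0 = 1 := by rw [wfun, if_pos rfl]; norm_num [tfun]
    have h1 : wfun s 0 (0 + 1) = 1 := by rw [wfun, if_pos rfl]; norm_num [tfun]
    have hS2 : (∑' n : ℕ, ENNReal.ofReal (wfun s 0 (n + 1 + 1))) = resZ s := by
      rw [← tsum_shift' hs]
      refine tsum_congr fun n => ?_
      congr 1
      rw [wfun, if_pos rfl]
      congr 1
      rw [show n + 1 + 1 - 1 = n + 1 from rfl, Nat.max_eq_left (by omega)]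
    rw [h0, h1, hS2, ENNReal.ofReal_one]
  have hrow : ∀ m : ℕ, (∑' n : ℕ, ENNReal.ofReal (wfun s (m + 1) n))
      = ENNReal.ofReal (tfun s (m + 1)) * resZ s := by
    intro m
    have hterm : ∀ n : ℕ, ENNReal.ofReal (wfun s (m + 1) n)
        = ENNReal.ofReal (tfun s (m + 1)) * ENNReal.ofReal (tfun s (n - (m + 1))) := by
      intro n
      rw [wfun, if_neg (Nat.succ_ne_zero m)]
      exact ENNReal.ofReal_mul (tfun_nonneg _ _)
    simp_rw [hterm]
    rw [ENNReal.tsum_mul_left, tsum_shift hs (m + 1)]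
  calc resW s = ∑' (m : ℕ) (n : ℕ), ENNReal.ofReal (wfun s m n) := by
        rw [resW, ENNReal.tsum_prod']
    _ = (∑' n : ℕ, ENNReal.ofReal (wfun s 0 n))
        + ∑' (m : ℕ) (n : ℕ), ENNReal.ofReal (wfun s (m + 1) n) := by
        rw [tsum_eq_zero_add' ENNReal.summable]
    _ = (1 + (1 + resZ s)) + resZ s * resZ s := by
        rw [hrow0]
        congr 1
        simp_rw [hrow]
        rw [ENNReal.tsum_mul_right, tsum_shift' hs]

private lemma resW_ne_top {s : ℝ} (hs : 1 < s) : resW s ≠ ⊤ := by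
  rw [resW_eq (by linarith : (0:ℝ) < s)]
  have hZ := resZ_ne_top hs
  exact ENNReal.add_ne_top.mpr ⟨ENNReal.add_ne_top.mpr ⟨ENNReal.one_ne_top,
    ENNReal.add_ne_top.mpr ⟨ENNReal.one_ne_top, hZ⟩⟩, ENNReal.mul_ne_top hZ hZ⟩

set_option maxHeartbeats 2000000 in
/-- Measure estimate for resonant frequencies: for `σ > 1`, gap condition
`e_{n+1}(ω) - e_n(ω) ≥ c·n` and Lipschitz bound `|||e||| ≤ κ < 1`, the set of
`ω ∈ [ω₋, ω₊]` with `|ωk + e_m(ω) - e_n(ω)| < γ(k+n-m)^{-σ}` for some `k ≥ 1`,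
`n > m` has measure at most `C γ/(1-κ)`, with `C = C(σ, c, ω₋, ω₊)`. -/
theorem resonant_frequency_measure_estimate (σ c ωm ωp : ℝ)
    (hσ : 1 < σ) (hc : 0 < c) (hω : 0 < ωm) (hωω : ωm < ωp) :
    ∃ C : ℝ, 0 < C ∧
      ∀ (e : ℕ → ℝ → ℝ) (κ γ : ℝ), 0 ≤ κ → κ < 1 → 0 < γ →
        (∀ n : ℕ, ∀ ω ∈ Set.Icc ωm ωp, c * n ≤ e (n + 1) ω - e n ω) →
        (∀ m n : ℕ, m < n → ∀ ω ∈ Set.Icc ωm ωp, ∀ ω' ∈ Set.Icc ωm ωp,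
          |(e n ω - e m ω) - (e n ω' - e m ω')| ≤ κ * |ω - ω'|) →
        volume {ω ∈ Set.Icc ωm ωp | ∃ k m n : ℕ, 1 ≤ k ∧ m < n ∧
            |ω * k + e m ω - e n ω| < γ * ((k + n - m : ℝ)) ^ (-σ)}
          ≤ ENNReal.ofReal (C * γ / (1 - κ)) := by
  have hσ0 : 0 < σ := by linarith
  set s : ℝ := (σ + 1) / 2 with hs_def
  have hs1 : 1 < s := by rw [hs_def]; linarith
  have hs0 : 0 < s := by linarith
  have hωp : 0 < ωp := lt_trans hω hωω
  set A : ℝ := (ωp + 1) / c with hA_def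
  have hA : 0 < A := div_pos (by linarith) hc
  set K : ℝ := 2 * (A ^ s + 1) with hK_def
  have hAs : 0 < A ^ s := Real.rpow_pos_of_pos hA s
  have hK2 : 2 * A ^ s ≤ K := by rw [hK_def]; nlinarith
  have hK1 : 2 ≤ K := by rw [hK_def]; nlinarith
  have hK0 : 0 < K := by linarith
  have hZW_ne : resZ s * resW s ≠ ⊤ := ENNReal.mul_ne_top (resZ_ne_top hs1) (resW_ne_top hs1)
  set T : ℝ := (resZ s * resW s).toReal with hT_def
  have hT0 : 0 ≤ T := ENNReal.toReal_nonneg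
  set C : ℝ := max (K * T) (ωp - ωm) + 1 with hC_def
  have hCKT : K * T ≤ C := by
    have := le_max_left (K * T) (ωp - ωm); rw [hC_def]; linarith
  have hCω : ωp - ωm ≤ C := by
    have := le_max_right (K * T) (ωp - ωm); rw [hC_def]; linarith
  refine ⟨C, by linarith, ?_⟩
  intro e κ γ hκ0 hκ1 hγ hgap hlip
  have h1κ : 0 < 1 - κ := by linarith
  rcases le_or_gt γ 1 with hγ1 | hγ1
  swap
  · -- easy case γ > 1
    refine le_trans (measure_mono (Set.sep_subset _ _)) ?_
    rw [Real.volume_Icc]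
    apply ENNReal.ofReal_le_ofReal
    have hγκ : 1 ≤ γ / (1 - κ) := (one_le_div h1κ).mpr (by linarith)
    calc ωp - ωm ≤ C := hCω
      _ = C * 1 := (mul_one C).symm
      _ ≤ C * (γ / (1 - κ)) := mul_le_mul_of_nonneg_left hγκ (by linarith)
      _ = C * γ / (1 - κ) := by ring
  · -- main case γ ≤ 1
    set B : ℕ × ℕ × ℕ → Set ℝ := fun p =>
      {ω | ω ∈ Set.Icc ωm ωp ∧ 1 ≤ p.1 ∧ p.2.1 < p.2.2 ∧
        |ω * p.1 + e p.2.1 ω - e p.2.2 ω| < γ * ((p.1 : ℝ) + p.2.2 - p.2.1) ^ (-σ)}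
      with hB_def
    have hsub : {ω ∈ Set.Icc ωm ωp | ∃ k m n : ℕ, 1 ≤ k ∧ m < n ∧
        |ω * k + e m ω - e n ω| < γ * ((k + n - m : ℝ)) ^ (-σ)} ⊆ ⋃ p, B p := by
      intro ω hω
      obtain ⟨hωI, k, m, n, hk, hmn, hlt⟩ := hω
      exact Set.mem_iUnion.mpr ⟨(k, m, n), hωI, hk, hmn, hlt⟩
    have key : ∀ p : ℕ × ℕ × ℕ, volume (B p) ≤ ENNReal.ofReal (K * γ / (1 - κ)) *
        (ENNReal.ofReal (tfun s p.1) * ENNReal.ofReal (wfun s p.2.1 p.2.2)) := by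
      rintro ⟨k, m, n⟩
      dsimp only
      rcases Set.eq_empty_or_nonempty (B (k, m, n)) with hBe | ⟨ω₀, hω₀⟩
      · rw [hBe]
        simp
      simp only [hB_def, Set.mem_setOf_eq] at hω₀
      obtain ⟨hω₀I, hk, hmn, hlt₀⟩ := hω₀
      have hkR : (1:ℝ) ≤ (k:ℝ) := by exact_mod_cast hk
      have hkpos : (0:ℝ) < k := by linarith
      have hnmR : (m:ℝ) + 1 ≤ (n:ℝ) := by exact_mod_cast hmn
      set r : ℝ := (k:ℝ) + n - m with hr_def
      have hrk : (k:ℝ) ≤ r := by rw [hr_def]; linarith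
      have hr1 : 1 ≤ r := by linarith
      have hr0 : 0 < r := by linarith
      -- diameter bound
      have hL : ∀ x ∈ B (k, m, n), ∀ y ∈ B (k, m, n),
          |x - y| ≤ 2 * (γ * r ^ (-σ)) / ((1 - κ) * k) := by
        have hhalf : ∀ x ∈ B (k, m, n), ∀ y ∈ B (k, m, n), x ≤ y →
            y - x ≤ 2 * (γ * r ^ (-σ)) / ((1 - κ) * k) := by
          intro x hx y hy hxy
          simp only [hB_def, Set.mem_setOf_eq] at hx hy
          obtain ⟨hxI, -, -, hxlt⟩ := hx
          obtain ⟨hyI, -, -, hylt⟩ := hy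
          rw [← hr_def] at hxlt hylt
          have hlxy := hlip m n hmn y hyI x hxI
          have habs : |y - x| = y - x := abs_of_nonneg (by linarith)
          have h1 : (e n y - e m y) - (e n x - e m x) ≤ κ * (y - x) := by
            calc (e n y - e m y) - (e n x - e m x) ≤ |(e n y - e m y) - (e n x - e m x)| :=
                  le_abs_self _
              _ ≤ κ * |y - x| := hlxy
              _ = κ * (y - x) := by rw [habs]
          have hx2 := abs_lt.mp hxlt
          have hy2 := abs_lt.mp hylt
          have hineq : (1 - κ) * k * (y - x) < 2 * (γ * r ^ (-σ)) := by
            nlinarith [hx2.1, hy2.2, h1,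
              mul_nonneg (mul_nonneg hκ0 (sub_nonneg.mpr hxy)) (by linarith : (0:ℝ) ≤ (k:ℝ) - 1)]
          have hden : 0 < (1 - κ) * (k:ℝ) := mul_pos h1κ hkpos
          rw [le_div_iff₀ hden]
          nlinarith [hineq]
        intro x hx y hy
        rcases le_total x y with h | h
        · rw [abs_sub_comm, abs_of_nonneg (by linarith)]
          exact hhalf x hx y hy h
        · rw [abs_of_nonneg (by linarith)]
          exact hhalf y hy x hx h
      have hvol : volume (B (k, m, n)) ≤ ENNReal.ofReal (2 * (γ * r ^ (-σ)) / ((1 - κ) * k)) :=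
        vol_le_of_abs_sub_le hL
      -- upper bound for the gap at the witness point
      have hrσ1 : r ^ (-σ) ≤ 1 := Real.rpow_le_one_of_one_le_of_nonpos hr1 (by linarith)
      have hgap₀ : ∀ j : ℕ, c * j ≤ e (j + 1) ω₀ - e j ω₀ := fun j => hgap j ω₀ hω₀I
      have hEub : e n ω₀ - e m ω₀ ≤ (ωp + 1) * k := by
        have h2 := (abs_lt.mp hlt₀).1
        have hω₀p : ω₀ ≤ ωp := hω₀I.2
        have hay : γ * r ^ (-σ) ≤ 1 := by
          nlinarith [Real.rpow_nonneg hr0.le (-σ)]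
        have haz : ω₀ * k ≤ ωp * k := mul_le_mul_of_nonneg_right hω₀p hkpos.le
        nlinarith [h2, hay, haz, hkR]
      -- the crucial elementary inequality
      have h4 : 2 * (k:ℝ) ^ (-s) ≤ K * wfun s m n := by
        rcases Nat.eq_zero_or_pos m with hm0 | hm1
        · subst hm0
          rcases lt_or_ge n 2 with hn2 | hn2
          · have hn1 : n = 1 := by omega
            subst hn1
            have hw1 : wfun s 0 1 = 1 := by rw [wfun, if_pos rfl]; norm_num [tfun]
            rw [hw1, mul_one]
            have hk1 : (k:ℝ) ^ (-s) ≤ 1 :=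
              Real.rpow_le_one_of_one_le_of_nonpos hkR (by linarith)
            linarith
          · set q : ℕ := n - 1 with hq_def
            have hq1 : 1 ≤ q := by omega
            have hwq : wfun s 0 n = tfun s q := by
              rw [wfun, if_pos rfl]
              congr 1
              exact Nat.max_eq_left (by omega)
            have hE1 : c * (q:ℝ) ≤ e n ω₀ - e 0 ω₀ := by
              have ha := gap_sum hc.le hgap₀ 1 q
              rw [show 1 + q = n by omega] at ha
              have hb := hgap₀ 0
              push_cast at ha hb
              linarith
            have hqA : (q:ℝ) ≤ A * (k:ℝ) := by
              rw [hA_def, div_mul_eq_mul_div, le_div_iff₀ hc]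
              nlinarith [hE1, hEub]
            have hqpos : (0:ℝ) < q := by exact_mod_cast hq1
            have hks : (k:ℝ) ^ (-s) ≤ A ^ s * (q:ℝ) ^ (-s) :=
              rpow_neg_le_of_le hs0 hqpos hkpos hA hqA
            rw [hwq]
            simp only [tfun]
            have h5 : 2 * A ^ s * ((q:ℝ) ^ (-s)) ≤ K * ((q:ℝ) ^ (-s)) :=
              mul_le_mul_of_nonneg_right hK2 (Real.rpow_nonneg (Nat.cast_nonneg q) (-s))
            linarith [hks, h5]
        · have hm0 : m ≠ 0 := by omega
          have hwm : wfun s m n = tfun s m * tfun s (n - m) := by rw [wfun, if_neg hm0]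
          have hdn : 1 ≤ n - m := by omega
          have hE1 : c * ((m:ℝ) * ((n - m : ℕ):ℝ)) ≤ e n ω₀ - e m ω₀ := by
            have ha := gap_sum hc.le hgap₀ m (n - m)
            rw [show m + (n - m) = n by omega] at ha
            exact ha
          have hmpos : (0:ℝ) < (m:ℝ) := by exact_mod_cast hm1
          have hdpos : (0:ℝ) < ((n - m : ℕ):ℝ) := by exact_mod_cast hdn
          have hapos : (0:ℝ) < (m:ℝ) * ((n - m : ℕ):ℝ) := mul_pos hmpos hdpos
          have haA : (m:ℝ) * ((n - m : ℕ):ℝ) ≤ A * (k:ℝ) := by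
            rw [hA_def, div_mul_eq_mul_div, le_div_iff₀ hc]
            nlinarith [hE1, hEub]
          have hks := rpow_neg_le_of_le hs0 hapos hkpos hA haA
          rw [Real.mul_rpow (Nat.cast_nonneg m) (Nat.cast_nonneg _)] at hks
          rw [hwm]
          simp only [tfun]
          have h5 : 2 * A ^ s * ((m:ℝ) ^ (-s) * (((n - m : ℕ)):ℝ) ^ (-s)) ≤
              K * ((m:ℝ) ^ (-s) * (((n - m : ℕ)):ℝ) ^ (-s)) :=
            mul_le_mul_of_nonneg_right hK2
              (mul_nonneg (Real.rpow_nonneg (Nat.cast_nonneg m) _)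
                (Real.rpow_nonneg (Nat.cast_nonneg _) _))
          linarith [hks, h5]
      -- assemble the per-set bound
      refine hvol.trans ?_
      have hreal : 2 * (γ * r ^ (-σ)) / ((1 - κ) * k) ≤
          K * γ / (1 - κ) * (tfun s k * wfun s m n) := by
        have hrσk : r ^ (-σ) ≤ (k:ℝ) ^ (-σ) :=
          Real.rpow_le_rpow_of_nonpos hkpos hrk (by linarith)
        have hkss : (k:ℝ) ^ (-σ) / k = (k:ℝ) ^ (-s) * (k:ℝ) ^ (-s) := by
          rw [← Real.rpow_add hkpos]
          rw [show -s + -s = -σ - 1 by rw [hs_def]; ring]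
          rw [Real.rpow_sub hkpos, Real.rpow_one]
        have hγκ0 : 0 ≤ γ / (1 - κ) := le_of_lt (div_pos hγ h1κ)
        have hstep : 2 * (r ^ (-σ) / k) ≤ K * (tfun s k * wfun s m n) := by
          have e1 : r ^ (-σ) / k ≤ (k:ℝ) ^ (-σ) / k := by gcongr
          calc 2 * (r ^ (-σ) / k) ≤ 2 * ((k:ℝ) ^ (-σ) / k) := by linarith
            _ = 2 * (k:ℝ) ^ (-s) * ((k:ℝ) ^ (-s)) := by rw [hkss]; ring
            _ ≤ K * wfun s m n * ((k:ℝ) ^ (-s)) :=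
                mul_le_mul_of_nonneg_right h4 (Real.rpow_nonneg hkpos.le _)
            _ = K * (tfun s k * wfun s m n) := by simp only [tfun]; ring
        calc 2 * (γ * r ^ (-σ)) / ((1 - κ) * k) = (2 * (r ^ (-σ) / k)) * (γ / (1 - κ)) := by
              field_simp
          _ ≤ (K * (tfun s k * wfun s m n)) * (γ / (1 - κ)) :=
              mul_le_mul_of_nonneg_right hstep hγκ0
          _ = K * γ / (1 - κ) * (tfun s k * wfun s m n) := by ring
      calc ENNReal.ofReal (2 * (γ * r ^ (-σ)) / ((1 - κ) * k))
          ≤ ENNReal.ofReal (K * γ / (1 - κ) * (tfun s k * wfun s m n)) :=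
            ENNReal.ofReal_le_ofReal hreal
        _ = ENNReal.ofReal (K * γ / (1 - κ)) *
            (ENNReal.ofReal (tfun s k) * ENNReal.ofReal (wfun s m n)) := by
            rw [ENNReal.ofReal_mul (div_nonneg (mul_nonneg hK0.le hγ.le) h1κ.le),
              ENNReal.ofReal_mul (tfun_nonneg s k)]
    refine le_trans (measure_mono hsub) ?_
    calc volume (⋃ p, B p) ≤ ∑' p : ℕ × ℕ × ℕ, volume (B p) := measure_iUnion_le _
      _ ≤ ∑' p : ℕ × ℕ × ℕ, ENNReal.ofReal (K * γ / (1 - κ)) *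
          (ENNReal.ofReal (tfun s p.1) * ENNReal.ofReal (wfun s p.2.1 p.2.2)) :=
          ENNReal.tsum_le_tsum key
      _ = ENNReal.ofReal (K * γ / (1 - κ)) * (resZ s * resW s) := by
          rw [ENNReal.tsum_mul_left]
          congr 1
          calc (∑' p : ℕ × ℕ × ℕ, ENNReal.ofReal (tfun s p.1) *
                ENNReal.ofReal (wfun s p.2.1 p.2.2))
              = ∑' (a : ℕ), ∑' (q : ℕ × ℕ),
                  ENNReal.ofReal (tfun s a) * ENNReal.ofReal (wfun s q.1 q.2) := by
                rw [ENNReal.tsum_prod']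
            _ = ∑' (a : ℕ), ENNReal.ofReal (tfun s a) * resW s := by
                refine tsum_congr fun a => ?_
                rw [ENNReal.tsum_mul_left, resW]
            _ = resZ s * resW s := by rw [ENNReal.tsum_mul_right, resZ]
      _ ≤ ENNReal.ofReal (C * γ / (1 - κ)) := by
          rw [show resZ s * resW s = ENNReal.ofReal T from (ENNReal.ofReal_toReal hZW_ne).symm]
          rw [← ENNReal.ofReal_mul (div_nonneg (mul_nonneg hK0.le hγ.le) h1κ.le)]
          apply ENNReal.ofReal_le_ofReal
          calc K * γ / (1 - κ) * T = (K * T) * (γ / (1 - κ)) := by ring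
            _ ≤ C * (γ / (1 - κ)) := mul_le_mul_of_nonneg_right hCKT (le_of_lt (div_pos hγ h1κ))
            _ = C * γ / (1 - κ) := by ring
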